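/- Let h : ℝ^n → ℝ be differentiable with L_h-Lipschitz gradient ∇h and g : ℝ^n → ℝ be lower semicontinuous and ρ_g-weakly convex with the implicit Lipschitz subgradient property with constant L_g > 0. Let γ ∈ (0, 1/(ρ_g + L_h)), η ∈ (0, 2), and let β > 0 be a fixed penalty parameter. Assume b lies in the column space of A and σ̃ > 0 satisfies ‖Aᵀv‖² ≥ σ̃‖v‖² for every v in the column space of A; set c_{γ,A} := γ²σ̃, α := (2β + γη(1 − η/2))/(2c_{γ,A}β²), and a := γη(2 − η)/(4β). Let (x^k, z^k, λ^k) be LiMEAL iterates with constant penalty β_k = β and step size η, and define P_limeal^k := P_β(x^k, z^k, λ^k) + 4α(‖z^k − z^{k−1}‖² + γ²L_h²‖x^k − x^{k−1}‖²) for k ≥ 1. Then for every k ≥ 1: P_limeal^k − P_limeal^{k+1} ≥ ((1 − γ(ρ_g + L_h))/(2γ) − 4α((1 + γL_g)² + γ²L_h²))‖x^{k+1} − x^k‖² + ((1/(2γ))(2/η − 1) − 4α)‖z^{k+1} − z^k‖² + (a/β)‖λ^{k+1} − λ^k‖² + α(γ²L_h²‖x^k − x^{k−1}‖² + ‖z^k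 − z^{k−1}‖²). -/

import Mathlib

open scoped RealInnerProductSpace

section Helpers


variable {E : Type*} [NormedAddCommGroup E] [InnerProductSpace ℝ E] [CompleteSpace E]

/-- Convexity of squared norm combo. -/
lemma sq_norm_combo_le {F : Type*} [SeminormedAddCommGroup F] [NormedSpace ℝ F]
    (u w : F) (s t : ℝ) (hs : 0 ≤ s) (ht : 0 ≤ t) (hst : s + t = 1) :
    ‖s • u + t • w‖ ^ 2 ≤ s * ‖u‖ ^ 2 + t * ‖w‖ ^ 2 := by
  have h1 : ‖s • u + t • w‖ ≤ s * ‖u‖ + t * ‖w‖ := by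
    calc ‖s • u + t • w‖ ≤ ‖s • u‖ + ‖t • w‖ := norm_add_le _ _
      _ = s * ‖u‖ + t * ‖w‖ := by
          rw [norm_smul, norm_smul, Real.norm_eq_abs, Real.norm_eq_abs,
            abs_of_nonneg hs, abs_of_nonneg ht]
  have h2 : ‖s • u + t • w‖ ^ 2 ≤ (s * ‖u‖ + t * ‖w‖) ^ 2 :=
    pow_le_pow_left₀ (norm_nonneg _) h1 2
  nlinarith [sq_nonneg (‖u‖ - ‖w‖), mul_nonneg hs ht]

/-- Descent lemma: quadratic upper bound for a function with Lipschitz gradient. -/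
lemma descent_lemma (h : E → ℝ) (h' : E → E) (L : ℝ)
    (hh' : ∀ x, HasGradientAt h (h' x) x)
    (hL : ∀ x y, ‖h' x - h' y‖ ≤ L * ‖x - y‖) (x y : E) :
    h y ≤ h x + ⟪h' x, y - x⟫ + L / 2 * ‖y - x‖ ^ 2 := by
  set d := y - x with hd
  have hφ : ∀ t : ℝ, HasDerivAt (fun t : ℝ => h (x + t • d)) ⟪h' (x + t • d), d⟫ t := by
    intro t
    have h1 : HasDerivAt (fun t : ℝ => x + t • d) d t := by
      simpa using ((hasDerivAt_id t).smul_const d).const_add x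
    have h2 := (hh' (x + t • d)).hasFDerivAt.comp_hasDerivAt t h1
    simp at h2
    exact h2
  have hψ : ∀ t : ℝ, HasDerivAt
      (fun t : ℝ => h (x + t • d) - t * ⟪h' x, d⟫ - L * ‖d‖ ^ 2 * (t ^ 2 / 2))
      (⟪h' (x + t • d), d⟫ - ⟪h' x, d⟫ - L * ‖d‖ ^ 2 * t) t := by
    intro t
    have p2 : HasDerivAt (fun t : ℝ => t * ⟪h' x, d⟫) ⟪h' x, d⟫ t := by
      simpa using (hasDerivAt_id t).mul_const (⟪h' x, d⟫)
    have p3 : HasDerivAt (fun t : ℝ => L * ‖d‖ ^ 2 * (t ^ 2 / 2)) (L * ‖d‖ ^ 2 * t) t := by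
      have := ((hasDerivAt_pow 2 t).div_const 2).const_mul (L * ‖d‖ ^ 2)
      norm_num at this
      convert this using 1 <;> ring
    exact ((hφ t).sub p2).sub p3
  have mono : AntitoneOn
      (fun t : ℝ => h (x + t • d) - t * ⟪h' x, d⟫ - L * ‖d‖ ^ 2 * (t ^ 2 / 2))
      (Set.Icc 0 1) := by
    apply antitoneOn_of_deriv_nonpos (convex_Icc 0 1)
    · exact fun t _ => (hψ t).continuousAt.continuousWithinAt
    · intro t ht
      exact (hψ t).differentiableAt.differentiableWithinAt
    · intro t ht
      rw [interior_Icc] at ht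
      rw [(hψ t).deriv]
      have e1 : ⟪h' (x + t • d), d⟫ - ⟪h' x, d⟫ = ⟪h' (x + t • d) - h' x, d⟫ :=
        (inner_sub_left _ _ _).symm
      have e2 : ⟪h' (x + t • d) - h' x, d⟫ ≤ ‖h' (x + t • d) - h' x‖ * ‖d‖ :=
        real_inner_le_norm _ _
      have e3 : ‖h' (x + t • d) - h' x‖ ≤ L * ‖(x + t • d) - x‖ := hL _ _
      have e4 : ‖(x + t • d) - x‖ = t * ‖d‖ := by
        rw [add_sub_cancel_left, norm_smul, Real.norm_eq_abs, abs_of_pos ht.1]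
      have e5 : ‖h' (x + t • d) - h' x‖ * ‖d‖ ≤ L * (t * ‖d‖) * ‖d‖ :=
        mul_le_mul_of_nonneg_right (e4 ▸ e3) (norm_nonneg d)
      nlinarith [e1, e2, e5]
  have key := mono (Set.left_mem_Icc.2 zero_le_one) (Set.right_mem_Icc.2 zero_le_one)
    zero_le_one
  simp only [zero_smul, add_zero, one_smul, zero_mul, zero_pow, sub_zero, one_pow] at key
  have hxy : x + d = y := by rw [hd]; abel
  rw [hxy] at key
  nlinarith [key]

/-- Growth: a minimizer of a strongly convex function has quadratic growth. -/
lemma growth_lemma (Φ : E → ℝ) (μ : ℝ) (hμ : 0 ≤ μ)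
    (hc : ConvexOn ℝ Set.univ (fun v => Φ v - μ / 2 * ‖v‖ ^ 2))
    (xs : E) (hmin : ∀ y, Φ xs ≤ Φ y) (y : E) :
    Φ xs + μ / 2 * ‖y - xs‖ ^ 2 ≤ Φ y := by
  have key : ∀ t : ℝ, 0 < t → t < 1 → μ / 2 * (1 - t) * ‖y - xs‖ ^ 2 ≤ Φ y - Φ xs := by
    intro t ht0 ht1
    have hcc := hc.2 (Set.mem_univ y) (Set.mem_univ xs) ht0.le
      (by linarith : (0:ℝ) ≤ 1 - t) (by ring)
    simp only at hcc
    have hnorm : ‖t • y + (1 - t) • xs‖ ^ 2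
        = t * ‖y‖ ^ 2 + (1 - t) * ‖xs‖ ^ 2 - t * (1 - t) * ‖y - xs‖ ^ 2 := by
      rw [@norm_add_sq_real, @norm_sub_sq_real, norm_smul, norm_smul,
        real_inner_smul_left, real_inner_smul_right, Real.norm_eq_abs, Real.norm_eq_abs,
        abs_of_pos ht0, abs_of_nonneg (by linarith : (0:ℝ) ≤ 1 - t)]
      ring
    rw [hnorm] at hcc
    simp only [smul_eq_mul] at hcc
    have hmid := hmin (t • y + (1 - t) • xs)
    have h2 : t * (μ / 2 * (1 - t) * ‖y - xs‖ ^ 2) ≤ t * (Φ y - Φ xs) := by nlinarith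
    exact le_of_mul_le_mul_left h2 ht0
  refine le_of_forall_pos_le_add ?_
  intro ε hε
  rcases eq_or_lt_of_le (by positivity : (0:ℝ) ≤ μ / 2 * ‖y - xs‖ ^ 2) with h0 | hpos
  · have := hmin y; linarith [h0.symm]
  · set K := μ / 2 * ‖y - xs‖ ^ 2 with hK
    set t := min (1/2) (ε / K) with ht
    have ht0 : 0 < t := lt_min (by norm_num) (div_pos hε hpos)
    have ht1 : t < 1 := lt_of_le_of_lt (min_le_left _ _) (by norm_num)
    have hkey := key t ht0 ht1
    have htK : t * K ≤ ε := by
      have h3 : t ≤ ε / K := min_le_right _ _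
      calc t * K ≤ (ε / K) * K := by nlinarith
        _ = ε := by field_simp
    have he : μ / 2 * (1 - t) * ‖y - xs‖ ^ 2 = K - t * K := by rw [hK]; ring
    rw [he] at hkey
    linarith [hkey, htK]

end Helpers

/-- `P_β(x, z, λ) = f(x) + ⟨λ, Ax − b⟩ + (β/2)‖Ax − b‖² + (1/(2γ))‖x − z‖²`. -/
noncomputable def Pfun {n m : ℕ} (f : EuclideanSpace ℝ (Fin n) → ℝ)
    (A : Matrix (Fin m) (Fin n) ℝ) (b : EuclideanSpace ℝ (Fin m)) (γ β : ℝ)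
    (x z : EuclideanSpace ℝ (Fin n)) (lam : EuclideanSpace ℝ (Fin m)) : ℝ :=
  f x + ⟪lam, Matrix.toEuclideanLin A x - b⟫
    + β / 2 * ‖Matrix.toEuclideanLin A x - b‖ ^ 2 + 1 / (2 * γ) * ‖x - z‖ ^ 2

set_option maxHeartbeats 2000000 in
/-- Sufficient-descent property of the LiMEAL Lyapunov function
`P_limeal^k = P_β(x^k, z^k, λ^k) + 4α(‖z^k − z^{k−1}‖² + γ²L_h²‖x^k − x^{k−1}‖²)`. -/
theorem stmt_18 (n m : ℕ) (A : Matrix (Fin m) (Fin n) ℝ) (b : EuclideanSpace ℝ (Fin m))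
    (h : EuclideanSpace ℝ (Fin n) → ℝ)
    (h' : EuclideanSpace ℝ (Fin n) → EuclideanSpace ℝ (Fin n))
    (g : EuclideanSpace ℝ (Fin n) → ℝ) (ρg γ η Lh Lg β σ α a : ℝ)
    (hρg : 0 < ρg) (hγ0 : 0 < γ) (hγ : γ < 1 / (ρg + Lh)) (hη0 : 0 < η) (hη2 : η < 2)
    (hLg : 0 < Lg) (hβ : 0 < β) (hσ : 0 < σ)
    (hh' : ∀ x, HasGradientAt h (h' x) x)
    (hLh : ∀ x y, ‖h' x - h' y‖ ≤ Lh * ‖x - y‖)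
    (hlsc : LowerSemicontinuous g)
    (hwc : ConvexOn ℝ Set.univ fun x => g x + ρg / 2 * ‖x‖ ^ 2)
    (prox : EuclideanSpace ℝ (Fin n) → EuclideanSpace ℝ (Fin n))
    (hproxmin : ∀ w x, g (prox w) + 1 / (2 * γ) * ‖prox w - w‖ ^ 2
        ≤ g x + 1 / (2 * γ) * ‖x - w‖ ^ 2)
    (hproxuniq : ∀ w x, (∀ y, g x + 1 / (2 * γ) * ‖x - w‖ ^ 2
        ≤ g y + 1 / (2 * γ) * ‖y - w‖ ^ 2) → x = prox w)
    (hlip : ∀ w w', ‖γ⁻¹ • (w - prox w) - γ⁻¹ • (w' - prox w')‖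
        ≤ Lg * ‖prox w - prox w'‖)
    (hb : b ∈ LinearMap.range (Matrix.toEuclideanLin A))
    (hσA : ∀ v ∈ LinearMap.range (Matrix.toEuclideanLin A),
      σ * ‖v‖ ^ 2 ≤ ‖Matrix.toEuclideanLin A.transpose v‖ ^ 2)
    (hαdef : α = (2 * β + γ * η * (1 - η / 2)) / (2 * (γ ^ 2 * σ) * β ^ 2))
    (hadef : a = γ * η * (2 - η) / (4 * β))
    (x z : ℕ → EuclideanSpace ℝ (Fin n)) (lam : ℕ → EuclideanSpace ℝ (Fin m))
    (hxmin : ∀ k x',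
      h (x k) + ⟪h' (x k), x (k + 1) - x k⟫ + g (x (k + 1))
          + ⟪lam k, Matrix.toEuclideanLin A (x (k + 1)) - b⟫
          + β / 2 * ‖Matrix.toEuclideanLin A (x (k + 1)) - b‖ ^ 2
          + 1 / (2 * γ) * ‖x (k + 1) - z k‖ ^ 2
        ≤ h (x k) + ⟪h' (x k), x' - x k⟫ + g x'
          + ⟪lam k, Matrix.toEuclideanLin A x' - b⟫
          + β / 2 * ‖Matrix.toEuclideanLin A x' - b‖ ^ 2
          + 1 / (2 * γ) * ‖x' - z k‖ ^ 2)
    (hz : ∀ k, z (k + 1) = z k - η • (z k - x (k + 1)))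
    (hlam : ∀ k, lam (k + 1) = lam k + β • (Matrix.toEuclideanLin A (x (k + 1)) - b))
    (hprox : ∀ k, x (k + 1)
        = prox (z k - γ • (h' (x k) + Matrix.toEuclideanLin A.transpose (lam (k + 1))))) :
    ∀ k, 1 ≤ k →
      (Pfun (fun v => h v + g v) A b γ β (x k) (z k) (lam k)
            + 4 * α * (‖z k - z (k - 1)‖ ^ 2 + γ ^ 2 * Lh ^ 2 * ‖x k - x (k - 1)‖ ^ 2))
          - (Pfun (fun v => h v + g v) A b γ β (x (k + 1)) (z (k + 1)) (lam (k + 1))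
            + 4 * α * (‖z (k + 1) - z k‖ ^ 2 + γ ^ 2 * Lh ^ 2 * ‖x (k + 1) - x k‖ ^ 2))
        ≥ ((1 - γ * (ρg + Lh)) / (2 * γ)
              - 4 * α * ((1 + γ * Lg) ^ 2 + γ ^ 2 * Lh ^ 2)) * ‖x (k + 1) - x k‖ ^ 2
          + (1 / (2 * γ) * (2 / η - 1) - 4 * α) * ‖z (k + 1) - z k‖ ^ 2
          + a / β * ‖lam (k + 1) - lam k‖ ^ 2
          + α * (γ ^ 2 * Lh ^ 2 * ‖x k - x (k - 1)‖ ^ 2 + ‖z k - z (k - 1)‖ ^ 2) := by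
  intro k hk
  obtain ⟨j, rfl⟩ : ∃ j, k = j + 1 := ⟨k - 1, (Nat.succ_pred_eq_of_pos hk).symm⟩
  simp only [Nat.add_sub_cancel]
  rcases Nat.eq_zero_or_pos n with hn | hn
  · -- trivial case n = 0
    subst hn
    haveI : Subsingleton (EuclideanSpace ℝ (Fin 0)) :=
      ⟨fun a b => by ext i; exact i.elim0⟩
    have hxe : ∀ i i' : ℕ, x i = x i' := fun _ _ => Subsingleton.elim _ _
    have hze : ∀ i i' : ℕ, z i = z i' := fun _ _ => Subsingleton.elim _ _
    have hAx : ∀ i : ℕ, Matrix.toEuclideanLin A (x i) = b := by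
      obtain ⟨v, hv⟩ := hb
      intro i
      rw [← hv]
      congr 1
      exact Subsingleton.elim _ _
    have hlame : lam (j + 1 + 1) = lam (j + 1) := by
      rw [hlam (j + 1), hAx, sub_self, smul_zero, add_zero]
    rw [hxe (j + 1 + 1) (j + 1), hze (j + 1 + 1) (j + 1), hze j (j + 1), hxe j (j + 1), hlame]
    simp
  · -- main case n ≥ 1
    have hLh0 : 0 ≤ Lh := by
      have h1 := hLh (EuclideanSpace.single (⟨0, hn⟩ : Fin n) (1 : ℝ)) 0
      rw [sub_zero] at h1
      have h2 : ‖EuclideanSpace.single (⟨0, hn⟩ : Fin n) (1 : ℝ)‖ = 1 := by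
        rw [EuclideanSpace.norm_single]; norm_num
      rw [h2, mul_one] at h1
      exact le_trans (norm_nonneg _) h1
    have hρLh : 0 < ρg + Lh := by linarith
    have hγρ : γ * (ρg + Lh) < 1 := (lt_div_iff₀ hρLh).mp hγ
    have hμ0 : 0 ≤ 1 / γ - ρg := by
      rw [le_sub_iff_add_le, zero_add, le_div_iff₀ hγ0]
      nlinarith [mul_nonneg hγ0.le hLh0]
    have hα0 : 0 ≤ α := by
      rw [hαdef]
      apply div_nonneg
      · nlinarith [mul_pos (mul_pos hγ0 hη0) (by linarith : (0:ℝ) < 1 - η / 2)]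
      · positivity
    have hkeyid : α * (γ ^ 2 * σ) = 1 / β + a / β := by
      rw [hαdef, hadef]
      field_simp
      ring
    -- Step 1 : primal descent
    have step1 : Pfun (fun v => h v + g v) A b γ β (x (j + 1 + 1)) (z (j + 1)) (lam (j + 1))
        ≤ Pfun (fun v => h v + g v) A b γ β (x (j + 1)) (z (j + 1)) (lam (j + 1))
          - (1 - γ * (ρg + Lh)) / (2 * γ) * ‖x (j + 1 + 1) - x (j + 1)‖ ^ 2 := by
      have hΦmin : ∀ y : EuclideanSpace ℝ (Fin n),
          (⟪h' (x (j + 1)), x (j + 1 + 1)⟫ + g (x (j + 1 + 1))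
            + ⟪lam (j + 1), Matrix.toEuclideanLin A (x (j + 1 + 1)) - b⟫
            + β / 2 * ‖Matrix.toEuclideanLin A (x (j + 1 + 1)) - b‖ ^ 2
            + 1 / (2 * γ) * ‖x (j + 1 + 1) - z (j + 1)‖ ^ 2)
          ≤ ⟪h' (x (j + 1)), y⟫ + g y
            + ⟪lam (j + 1), Matrix.toEuclideanLin A y - b⟫
            + β / 2 * ‖Matrix.toEuclideanLin A y - b‖ ^ 2
            + 1 / (2 * γ) * ‖y - z (j + 1)‖ ^ 2 := by
        intro y
        have hx := hxmin (j + 1) y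
        have e1 : ⟪h' (x (j + 1)), x (j + 1 + 1) - x (j + 1)⟫
            = ⟪h' (x (j + 1)), x (j + 1 + 1)⟫ - ⟪h' (x (j + 1)), x (j + 1)⟫ :=
          inner_sub_right _ _ _
        have e2 : ⟪h' (x (j + 1)), y - x (j + 1)⟫
            = ⟪h' (x (j + 1)), y⟫ - ⟪h' (x (j + 1)), x (j + 1)⟫ :=
          inner_sub_right _ _ _
        linarith
      have hr : ConvexOn ℝ Set.univ (fun v : EuclideanSpace ℝ (Fin n) =>
          ⟪h' (x (j + 1)), v⟫ + ⟪lam (j + 1), Matrix.toEuclideanLin A v - b⟫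
            + β / 2 * ‖Matrix.toEuclideanLin A v - b‖ ^ 2
            + (1 / (2 * γ) * ‖z (j + 1)‖ ^ 2 - 1 / γ * ⟪v, z (j + 1)⟫)) := by
        refine ⟨convex_univ, ?_⟩
        intro p _ q _ s t hs ht hst
        have hts : t = 1 - s := by linarith
        subst hts
        have hA : Matrix.toEuclideanLin A (s • p + (1 - s) • q) - b
            = s • (Matrix.toEuclideanLin A p - b) + (1 - s) • (Matrix.toEuclideanLin A q - b) := by
          rw [map_add, map_smul, map_smul]
          module
        have hsq := sq_norm_combo_le (Matrix.toEuclideanLin A p - b)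
          (Matrix.toEuclideanLin A q - b) s (1 - s) hs ht (by ring)
        have hsq2 := mul_le_mul_of_nonneg_left hsq (by positivity : (0:ℝ) ≤ β / 2)
        simp only [hA, inner_add_right, real_inner_smul_right, inner_add_left,
          real_inner_smul_left, smul_eq_mul]
        linarith [hsq2]
      have hconv : ConvexOn ℝ Set.univ (fun v : EuclideanSpace ℝ (Fin n) =>
          (⟪h' (x (j + 1)), v⟫ + g v + ⟪lam (j + 1), Matrix.toEuclideanLin A v - b⟫
            + β / 2 * ‖Matrix.toEuclideanLin A v - b‖ ^ 2
            + 1 / (2 * γ) * ‖v - z (j + 1)‖ ^ 2)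
          - (1 / γ - ρg) / 2 * ‖v‖ ^ 2) := by
        have hfeq : (fun v : EuclideanSpace ℝ (Fin n) =>
            (⟪h' (x (j + 1)), v⟫ + g v + ⟪lam (j + 1), Matrix.toEuclideanLin A v - b⟫
              + β / 2 * ‖Matrix.toEuclideanLin A v - b‖ ^ 2
              + 1 / (2 * γ) * ‖v - z (j + 1)‖ ^ 2)
            - (1 / γ - ρg) / 2 * ‖v‖ ^ 2)
            = fun v : EuclideanSpace ℝ (Fin n) => (g v + ρg / 2 * ‖v‖ ^ 2)
              + (⟪h' (x (j + 1)), v⟫ + ⟪lam (j + 1), Matrix.toEuclideanLin A v - b⟫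
                + β / 2 * ‖Matrix.toEuclideanLin A v - b‖ ^ 2
                + (1 / (2 * γ) * ‖z (j + 1)‖ ^ 2 - 1 / γ * ⟪v, z (j + 1)⟫)) := by
          funext v
          have hns : ‖v - z (j + 1)‖ ^ 2
              = ‖v‖ ^ 2 - 2 * ⟪v, z (j + 1)⟫ + ‖z (j + 1)‖ ^ 2 :=
            @norm_sub_sq_real _ _ _ v (z (j + 1))
          rw [hns]
          field_simp
          ring
        rw [hfeq]
        exact hwc.add hr
      have hgrow := growth_lemma (fun v : EuclideanSpace ℝ (Fin n) =>
          ⟪h' (x (j + 1)), v⟫ + g v + ⟪lam (j + 1), Matrix.toEuclideanLin A v - b⟫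
            + β / 2 * ‖Matrix.toEuclideanLin A v - b‖ ^ 2
            + 1 / (2 * γ) * ‖v - z (j + 1)‖ ^ 2)
        (1 / γ - ρg) hμ0 hconv (x (j + 1 + 1)) hΦmin (x (j + 1))
      have hgrow' : (⟪h' (x (j + 1)), x (j + 1 + 1)⟫ + g (x (j + 1 + 1))
            + ⟪lam (j + 1), Matrix.toEuclideanLin A (x (j + 1 + 1)) - b⟫
            + β / 2 * ‖Matrix.toEuclideanLin A (x (j + 1 + 1)) - b‖ ^ 2
            + 1 / (2 * γ) * ‖x (j + 1 + 1) - z (j + 1)‖ ^ 2)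
            + (1 / γ - ρg) / 2 * ‖x (j + 1) - x (j + 1 + 1)‖ ^ 2
          ≤ ⟪h' (x (j + 1)), x (j + 1)⟫ + g (x (j + 1))
            + ⟪lam (j + 1), Matrix.toEuclideanLin A (x (j + 1)) - b⟫
            + β / 2 * ‖Matrix.toEuclideanLin A (x (j + 1)) - b‖ ^ 2
            + 1 / (2 * γ) * ‖x (j + 1) - z (j + 1)‖ ^ 2 := hgrow
      rw [norm_sub_rev (x (j + 1))] at hgrow'
      have hdesc := descent_lemma h h' Lh hh' hLh (x (j + 1)) (x (j + 1 + 1))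
      have e3 : ⟪h' (x (j + 1)), x (j + 1 + 1) - x (j + 1)⟫
          = ⟪h' (x (j + 1)), x (j + 1 + 1)⟫ - ⟪h' (x (j + 1)), x (j + 1)⟫ :=
        inner_sub_right _ _ _
      have e5 : (1 - γ * (ρg + Lh)) / (2 * γ) = (1 / γ - ρg) / 2 - Lh / 2 := by
        field_simp
        ring
      simp only [Pfun]
      rw [e5]
      linarith [hgrow', hdesc, e3]
    -- dual increment
    have hdl : lam (j + 1 + 1) - lam (j + 1)
        = β • (Matrix.toEuclideanLin A (x (j + 1 + 1)) - b) := by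
      rw [hlam (j + 1), add_sub_cancel_left]
    -- Step 2 : effect of the dual update
    have step2 : Pfun (fun v => h v + g v) A b γ β (x (j + 1 + 1)) (z (j + 1)) (lam (j + 1 + 1))
        = Pfun (fun v => h v + g v) A b γ β (x (j + 1 + 1)) (z (j + 1)) (lam (j + 1))
          + 1 / β * ‖lam (j + 1 + 1) - lam (j + 1)‖ ^ 2 := by
      have e4 : ⟪lam (j + 1 + 1) - lam (j + 1), Matrix.toEuclideanLin A (x (j + 1 + 1)) - b⟫
          = ⟪lam (j + 1 + 1), Matrix.toEuclideanLin A (x (j + 1 + 1)) - b⟫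
            - ⟪lam (j + 1), Matrix.toEuclideanLin A (x (j + 1 + 1)) - b⟫ :=
        inner_sub_left _ _ _
      have e3 : ⟪lam (j + 1 + 1) - lam (j + 1), Matrix.toEuclideanLin A (x (j + 1 + 1)) - b⟫
          = 1 / β * ‖lam (j + 1 + 1) - lam (j + 1)‖ ^ 2 := by
        rw [hdl, real_inner_smul_left, real_inner_self_eq_norm_sq, norm_smul,
          Real.norm_eq_abs, abs_of_pos hβ, mul_pow]
        field_simp
      simp only [Pfun]
      linarith [e3, e4]
    -- Step 3 : effect of the z update
    have step3 : Pfun (fun v => h v + g v) A b γ β (x (j + 1 + 1)) (z (j + 1 + 1)) (lam (j + 1 + 1))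
        = Pfun (fun v => h v + g v) A b γ β (x (j + 1 + 1)) (z (j + 1)) (lam (j + 1 + 1))
          - 1 / (2 * γ) * (2 / η - 1) * ‖z (j + 1 + 1) - z (j + 1)‖ ^ 2 := by
      have e1 : x (j + 1 + 1) - z (j + 1 + 1) = (1 - η) • (x (j + 1 + 1) - z (j + 1)) := by
        rw [hz (j + 1)]
        module
      have e2 : z (j + 1 + 1) - z (j + 1) = η • (x (j + 1 + 1) - z (j + 1)) := by
        rw [hz (j + 1)]
        module
      simp only [Pfun]
      rw [e1, e2, norm_smul, norm_smul, Real.norm_eq_abs, Real.norm_eq_abs, mul_pow, mul_pow,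
        sq_abs, sq_abs]
      field_simp
      ring
    -- Step 4 : dual bound
    have key4 : (1 / β + a / β) * ‖lam (j + 1 + 1) - lam (j + 1)‖ ^ 2
        ≤ 4 * α * (1 + γ * Lg) ^ 2 * ‖x (j + 1 + 1) - x (j + 1)‖ ^ 2
          + 3 * α * ‖z (j + 1) - z j‖ ^ 2
          + 3 * α * (γ ^ 2 * Lh ^ 2) * ‖x (j + 1) - x j‖ ^ 2 := by
      have hrange : lam (j + 1 + 1) - lam (j + 1)
          ∈ LinearMap.range (Matrix.toEuclideanLin A) := by
        obtain ⟨v0, hv0⟩ := hb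
        refine ⟨β • x (j + 1 + 1) - β • v0, ?_⟩
        rw [map_sub, map_smul, map_smul, hv0, hdl, smul_sub]
      have hσ2 := hσA _ hrange
      rw [map_sub] at hσ2
      set u1 := z (j + 1) - γ • (h' (x (j + 1))
          + Matrix.toEuclideanLin A.transpose (lam (j + 1 + 1))) with hu1
      set u0 := z j - γ • (h' (x j)
          + Matrix.toEuclideanLin A.transpose (lam (j + 1))) with hu0
      have hp1 : prox u1 = x (j + 1 + 1) := (hprox (j + 1)).symm
      have hp0 : prox u0 = x (j + 1) := (hprox j).symm
      have hlip' := hlip u1 u0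
      rw [hp1, hp0] at hlip'
      have hD : γ⁻¹ • (u1 - x (j + 1 + 1)) - γ⁻¹ • (u0 - x (j + 1))
          = γ⁻¹ • (z (j + 1) - z j) - γ⁻¹ • (x (j + 1 + 1) - x (j + 1))
            - (h' (x (j + 1)) - h' (x j))
            - (Matrix.toEuclideanLin A.transpose (lam (j + 1 + 1))
              - Matrix.toEuclideanLin A.transpose (lam (j + 1))) := by
        rw [hu1, hu0]
        match_scalars <;> field_simp
      have t1 : Matrix.toEuclideanLin A.transpose (lam (j + 1 + 1))
            - Matrix.toEuclideanLin A.transpose (lam (j + 1))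
          = (γ⁻¹ • (z (j + 1) - z j) - γ⁻¹ • (x (j + 1 + 1) - x (j + 1))
              - (h' (x (j + 1)) - h' (x j)))
            - (γ⁻¹ • (u1 - x (j + 1 + 1)) - γ⁻¹ • (u0 - x (j + 1))) := by
        rw [hD]
        abel
      have hiv : (0:ℝ) < γ⁻¹ := inv_pos.mpr hγ0
      have n2 : ‖γ⁻¹ • (z (j + 1) - z j)‖ = γ⁻¹ * ‖z (j + 1) - z j‖ := by
        rw [norm_smul, Real.norm_eq_abs, abs_of_pos hiv]
      have n3 : ‖γ⁻¹ • (x (j + 1 + 1) - x (j + 1))‖ = γ⁻¹ * ‖x (j + 1 + 1) - x (j + 1)‖ := by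
        rw [norm_smul, Real.norm_eq_abs, abs_of_pos hiv]
      have n4 := hLh (x (j + 1)) (x j)
      have n5 : ‖Matrix.toEuclideanLin A.transpose (lam (j + 1 + 1))
            - Matrix.toEuclideanLin A.transpose (lam (j + 1))‖
          ≤ ‖γ⁻¹ • (z (j + 1) - z j) - γ⁻¹ • (x (j + 1 + 1) - x (j + 1))
              - (h' (x (j + 1)) - h' (x j))‖
            + ‖γ⁻¹ • (u1 - x (j + 1 + 1)) - γ⁻¹ • (u0 - x (j + 1))‖ := by
        rw [t1]
        exact norm_sub_le _ _
      have n1 : ‖γ⁻¹ • (z (j + 1) - z j) - γ⁻¹ • (x (j + 1 + 1) - x (j + 1))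
            - (h' (x (j + 1)) - h' (x j))‖
          ≤ ‖γ⁻¹ • (z (j + 1) - z j)‖ + ‖γ⁻¹ • (x (j + 1 + 1) - x (j + 1))‖
            + ‖h' (x (j + 1)) - h' (x j)‖ := by
        refine (norm_sub_le _ _).trans ?_
        have := norm_sub_le (γ⁻¹ • (z (j + 1) - z j)) (γ⁻¹ • (x (j + 1 + 1) - x (j + 1)))
        linarith
      have htri : ‖Matrix.toEuclideanLin A.transpose (lam (j + 1 + 1))
            - Matrix.toEuclideanLin A.transpose (lam (j + 1))‖
          ≤ γ⁻¹ * ‖z (j + 1) - z j‖ + γ⁻¹ * ‖x (j + 1 + 1) - x (j + 1)‖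
            + Lh * ‖x (j + 1) - x j‖ + Lg * ‖x (j + 1 + 1) - x (j + 1)‖ := by
        linarith [n1, n2, n3, n4, n5, hlip']
      have eγ1 : γ * γ⁻¹ * ‖z (j + 1) - z j‖ = ‖z (j + 1) - z j‖ := by
        rw [mul_inv_cancel₀ hγ0.ne', one_mul]
      have eγ2 : γ * γ⁻¹ * ‖x (j + 1 + 1) - x (j + 1)‖ = ‖x (j + 1 + 1) - x (j + 1)‖ := by
        rw [mul_inv_cancel₀ hγ0.ne', one_mul]
      have hmul : γ * ‖Matrix.toEuclideanLin A.transpose (lam (j + 1 + 1))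
            - Matrix.toEuclideanLin A.transpose (lam (j + 1))‖
          ≤ ‖z (j + 1) - z j‖ + (1 + γ * Lg) * ‖x (j + 1 + 1) - x (j + 1)‖
            + γ * Lh * ‖x (j + 1) - x j‖ := by
        have h6 := mul_le_mul_of_nonneg_left htri hγ0.le
        linarith [h6, eγ1, eγ2]
      have hSnn : (0:ℝ) ≤ γ * ‖Matrix.toEuclideanLin A.transpose (lam (j + 1 + 1))
            - Matrix.toEuclideanLin A.transpose (lam (j + 1))‖ := by positivity
      have hsq1 := pow_le_pow_left₀ hSnn hmul 2
      have hsq2 : (‖z (j + 1) - z j‖ + (1 + γ * Lg) * ‖x (j + 1 + 1) - x (j + 1)‖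
            + γ * Lh * ‖x (j + 1) - x j‖) ^ 2
          ≤ 3 * ‖z (j + 1) - z j‖ ^ 2
            + 3 * ((1 + γ * Lg) * ‖x (j + 1 + 1) - x (j + 1)‖) ^ 2
            + 3 * (γ * Lh * ‖x (j + 1) - x j‖) ^ 2 := by
        linarith [sq_nonneg (‖z (j + 1) - z j‖ - (1 + γ * Lg) * ‖x (j + 1 + 1) - x (j + 1)‖),
          sq_nonneg (‖z (j + 1) - z j‖ - γ * Lh * ‖x (j + 1) - x j‖),
          sq_nonneg ((1 + γ * Lg) * ‖x (j + 1 + 1) - x (j + 1)‖ - γ * Lh * ‖x (j + 1) - x j‖)]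
      have hc2 : γ ^ 2 * (σ * ‖lam (j + 1 + 1) - lam (j + 1)‖ ^ 2)
          ≤ γ ^ 2 * ‖Matrix.toEuclideanLin A.transpose (lam (j + 1 + 1))
            - Matrix.toEuclideanLin A.transpose (lam (j + 1))‖ ^ 2 :=
        mul_le_mul_of_nonneg_left hσ2 (by positivity)
      have hc3 : γ ^ 2 * σ * ‖lam (j + 1 + 1) - lam (j + 1)‖ ^ 2
          ≤ 3 * ‖z (j + 1) - z j‖ ^ 2
            + 3 * (1 + γ * Lg) ^ 2 * ‖x (j + 1 + 1) - x (j + 1)‖ ^ 2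
            + 3 * γ ^ 2 * Lh ^ 2 * ‖x (j + 1) - x j‖ ^ 2 := by
        have eq1 : (γ * ‖Matrix.toEuclideanLin A.transpose (lam (j + 1 + 1))
            - Matrix.toEuclideanLin A.transpose (lam (j + 1))‖) ^ 2
            = γ ^ 2 * ‖Matrix.toEuclideanLin A.transpose (lam (j + 1 + 1))
            - Matrix.toEuclideanLin A.transpose (lam (j + 1))‖ ^ 2 := by ring
        linarith [hc2, hsq1, hsq2, eq1]
      have hc4 := mul_le_mul_of_nonneg_left hc3 hα0
      have hkeyid2 : α * (γ ^ 2 * σ * ‖lam (j + 1 + 1) - lam (j + 1)‖ ^ 2)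
          = (1 / β + a / β) * ‖lam (j + 1 + 1) - lam (j + 1)‖ ^ 2 := by
        rw [← mul_assoc, hkeyid]
      have hslack : 0 ≤ α * ((1 + γ * Lg) ^ 2 * ‖x (j + 1 + 1) - x (j + 1)‖ ^ 2) :=
        mul_nonneg hα0 (by positivity)
      linarith [hc4, hkeyid2, hslack]
    -- final assembly
    linarith [step1, step2, step3, key4]
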